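/- Let k be an algebraically closed field of characteristic p > 0 and let w \in k(X) be a nonzero rational function. Then there exist f_0, \dots, f_{p-2} \in k(X) such that w'/w = \sum_{i=0}^{p-2} f_i^p \cdot X^i + (w'/w)^p \cdot X^{p-1}. Equivalently, in the Cartier decomposition of the logarithmic derivative w'/w, the top component f_{p-1} equals w'/w itself; i.e. the Cartier operator fixes logarithmic differentials: \mathfrak{c}(dw/w) = dw/w. -/

import Mathlib

/-- The formal derivative of a rational function `f = num/denom`, given by the
quotient rule `f' = (num' * denom - num * denom') / denom^2`. -/
noncomputable def ratDeriv {k : Type*} [Field k] (f : RatFunc k) : RatFunc k :=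
  (algebraMap (Polynomial k) (RatFunc k) (Polynomial.derivative f.num) *
      algebraMap (Polynomial k) (RatFunc k) f.denom -
    algebraMap (Polynomial k) (RatFunc k) f.num *
      algebraMap (Polynomial k) (RatFunc k) (Polynomial.derivative f.denom)) /
    algebraMap (Polynomial k) (RatFunc k) f.denom ^ 2

section Aux
variable {k : Type*} [Field k]

open Polynomial RatFunc

local notation "φ" => algebraMap (Polynomial k) (RatFunc k)

lemma aux_ratDeriv_eq (a b : k[X]) (hb : b ≠ 0) :
    ratDeriv (φ a / φ b) =
      (φ (derivative a) * φ b - φ a * φ (derivative b)) / φ b ^ 2 := by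
  set f := φ a / φ b with hf
  have hφb : φ b ≠ 0 := RatFunc.algebraMap_ne_zero hb
  have hφd : φ f.denom ≠ 0 := RatFunc.algebraMap_ne_zero f.denom_ne_zero
  have hcross : f.num * b = a * f.denom := by
    have h1 : φ f.num / φ f.denom = φ a / φ b := by rw [RatFunc.num_div_denom]
    have := (div_eq_div_iff hφd hφb).mp h1
    exact (RatFunc.algebraMap_injective k) (by push_cast [map_mul] at this ⊢; exact this)
  have hdvd : f.denom ∣ b := (f.isCoprime_num_denom.symm).dvd_of_dvd_mul_left ⟨a, by linear_combination hcross⟩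
  obtain ⟨e, he⟩ := hdvd
  have he' : a = f.num * e := by
    have hd0 : f.denom ≠ 0 := f.denom_ne_zero
    have : a * f.denom = f.num * e * f.denom := by rw [← hcross, he]; ring
    exact mul_right_cancel₀ hd0 this
  have he0 : e ≠ 0 := by rintro rfl; simp at he; exact hb he
  have hφe : φ e ≠ 0 := RatFunc.algebraMap_ne_zero he0
  show (φ (derivative f.num) * φ f.denom - φ f.num * φ (derivative f.denom)) / φ f.denom ^ 2 = _
  rw [div_eq_div_iff (pow_ne_zero 2 hφd) (pow_ne_zero 2 hφb)]
  have hpoly : (derivative f.num * f.denom - f.num * derivative f.denom) * b ^ 2 =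
      (derivative a * b - a * derivative b) * f.denom ^ 2 := by
    rw [he', he]; simp only [derivative_mul]; ring
  calc (φ (derivative f.num) * φ f.denom - φ f.num * φ (derivative f.denom)) * φ b ^ 2
      = φ ((derivative f.num * f.denom - f.num * derivative f.denom) * b ^ 2) := by
        push_cast [map_mul, map_sub, map_pow]; ring
    _ = φ ((derivative a * b - a * derivative b) * f.denom ^ 2) := by rw [hpoly]
    _ = _ := by push_cast [map_mul, map_sub, map_pow]; ring

noncomputable def LD (f : RatFunc k) : RatFunc k := ratDeriv f / f

lemma aux_ratDeriv_poly (q : k[X]) : ratDeriv (φ q) = φ (derivative q) := by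
  have := aux_ratDeriv_eq q 1 one_ne_zero
  simpa using this

lemma aux_LD_poly (q : k[X]) : LD (φ q) = φ (derivative q) / φ q := by
  rw [LD, aux_ratDeriv_poly]

lemma aux_LD_div (a b : k[X]) (ha : a ≠ 0) (hb : b ≠ 0) :
    LD (φ a / φ b) = φ (derivative a) / φ a - φ (derivative b) / φ b := by
  have hφa : φ a ≠ 0 := RatFunc.algebraMap_ne_zero ha
  have hφb : φ b ≠ 0 := RatFunc.algebraMap_ne_zero hb
  rw [LD, aux_ratDeriv_eq a b hb]
  field_simp

lemma aux_LD_mul {f g : RatFunc k} (hf : f ≠ 0) (hg : g ≠ 0) :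
    LD (f * g) = LD f + LD g := by
  have hfn : f.num ≠ 0 := RatFunc.num_ne_zero hf
  have hgn : g.num ≠ 0 := RatFunc.num_ne_zero hg
  have h1 : φ (f.num * g.num) / φ (f.denom * g.denom) = f * g := by
    rw [map_mul, map_mul, ← div_mul_div_comm, f.num_div_denom, g.num_div_denom]
  have hLf := aux_LD_div f.num f.denom hfn f.denom_ne_zero
  rw [f.num_div_denom] at hLf
  have hLg := aux_LD_div g.num g.denom hgn g.denom_ne_zero
  rw [g.num_div_denom] at hLg
  have hLfg := aux_LD_div (f.num * g.num) (f.denom * g.denom)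
    (mul_ne_zero hfn hgn) (mul_ne_zero f.denom_ne_zero g.denom_ne_zero)
  rw [h1] at hLfg
  rw [hLfg, hLf, hLg]
  have hφ : ∀ q : k[X], q ≠ 0 → φ q ≠ 0 := fun q hq => RatFunc.algebraMap_ne_zero hq
  have h1n := hφ _ hfn
  have h2n := hφ _ hgn
  have h3n := hφ _ f.denom_ne_zero
  have h4n := hφ _ g.denom_ne_zero
  simp only [derivative_mul, map_mul, map_add]
  field_simp
  ring

lemma aux_LD_one : LD (1 : RatFunc k) = 0 := by
  rw [show (1 : RatFunc k) = φ 1 from (map_one _).symm, aux_LD_poly]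
  simp

lemma aux_LD_prod (t : Multiset k[X]) (h : ∀ q ∈ t, q ≠ 0) :
    LD (φ t.prod) = (t.map fun q => LD (φ q)).sum := by
  induction t using Multiset.induction with
  | empty => simp [aux_LD_one]
  | cons a s ih =>
    rw [Multiset.prod_cons, map_mul, Multiset.map_cons, Multiset.sum_cons,
      aux_LD_mul (RatFunc.algebraMap_ne_zero (h a (Multiset.mem_cons_self a s)))
        (RatFunc.algebraMap_ne_zero (Multiset.prod_ne_zero
          fun h0 => (h 0 (Multiset.mem_cons_of_mem h0)) rfl)),
      ih (fun q hq => h q (Multiset.mem_cons_of_mem hq))]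

end Aux

section Good
variable {k : Type*} [Field k]
open Polynomial RatFunc

local notation "φ" => algebraMap (Polynomial k) (RatFunc k)

def IsGood (p : ℕ) (g : RatFunc k) : Prop :=
  ∃ c : Fin (p - 1) → RatFunc k,
    g = (∑ i : Fin (p - 1), (c i) ^ p * RatFunc.X ^ (i : ℕ)) + g ^ p * RatFunc.X ^ (p - 1)

variable {p : ℕ} [hp : Fact p.Prime] [CharP (RatFunc k) p]

omit [CharP (RatFunc k) p] in
lemma good_zero : IsGood p (0 : RatFunc k) :=
  ⟨0, by simp [zero_pow hp.out.ne_zero]⟩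

lemma good_add {g h : RatFunc k} (hg : IsGood p g) (hh : IsGood p h) :
    IsGood p (g + h) := by
  obtain ⟨c, hc⟩ := hg
  obtain ⟨d, hd⟩ := hh
  refine ⟨c + d, ?_⟩
  conv_lhs => rw [hc, hd]
  simp only [Pi.add_apply, add_pow_char, add_mul, Finset.sum_add_distrib]
  ring

lemma good_sub {g h : RatFunc k} (hg : IsGood p g) (hh : IsGood p h) :
    IsGood p (g - h) := by
  obtain ⟨c, hc⟩ := hg
  obtain ⟨d, hd⟩ := hh
  refine ⟨c - d, ?_⟩
  conv_lhs => rw [hc, hd]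
  simp only [Pi.sub_apply, sub_pow_char, sub_mul, Finset.sum_sub_distrib]
  ring

lemma good_sum (t : Multiset (RatFunc k)) (h : ∀ g ∈ t, IsGood p g) :
    IsGood p t.sum := by
  induction t using Multiset.induction with
  | empty => simpa using (good_zero : IsGood p (0 : RatFunc k))
  | cons a s ih =>
    rw [Multiset.sum_cons]
    exact good_add (h a (Multiset.mem_cons_self a s))
      (ih fun g hg => h g (Multiset.mem_cons_of_mem hg))

lemma good_inv [IsAlgClosed k] (r : k) :
    IsGood p ((RatFunc.X - RatFunc.C r)⁻¹ : RatFunc k) := by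
  obtain ⟨q, hq⟩ : ∃ q, p = q + 1 := ⟨p - 1, (Nat.succ_pred_eq_of_pos hp.out.pos).symm⟩
  set u : RatFunc k := RatFunc.X - RatFunc.C r with hu_def
  have hu : u ≠ 0 := by
    have h1 : φ (Polynomial.X - Polynomial.C r) = u := by
      rw [map_sub, RatFunc.algebraMap_X, RatFunc.algebraMap_C]
    rw [← h1]
    exact RatFunc.algebraMap_ne_zero (Polynomial.X_sub_C_ne_zero r)
  choose α hα using fun i : Fin (p - 1) =>
    IsAlgClosed.exists_pow_nat_eq (k := k) (r ^ (p - 1 - (i : ℕ))) hp.out.pos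
  refine ⟨fun i => RatFunc.C (α i) / u, ?_⟩
  have key1 : (∑ i ∈ Finset.range p, RatFunc.X ^ i * (RatFunc.C r) ^ (p - 1 - i)) * u
      = RatFunc.X ^ p - (RatFunc.C r) ^ p := by
    rw [hu_def]
    exact geom_sum₂_mul RatFunc.X (RatFunc.C r) p
  have key2 : u ^ p = RatFunc.X ^ p - (RatFunc.C r) ^ p := sub_pow_char RatFunc.X (RatFunc.C r)
  have key3 : (∑ i ∈ Finset.range p, RatFunc.X ^ i * (RatFunc.C r) ^ (p - 1 - i))
      = u ^ (p - 1) := by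
    apply mul_right_cancel₀ hu
    rw [key1, ← key2, ← pow_succ, Nat.sub_add_cancel hp.out.one_le]
  have hterm : ∀ i : Fin (p - 1),
      (RatFunc.C (α i) / u) ^ p * RatFunc.X ^ (i : ℕ)
        = RatFunc.X ^ (i : ℕ) * (RatFunc.C r) ^ (p - 1 - (i : ℕ)) / u ^ p := by
    intro i
    rw [div_pow, ← map_pow, hα i, map_pow]
    ring
  simp only [hterm]
  have hsum : (∑ i : Fin (p - 1),
        RatFunc.X ^ (i : ℕ) * (RatFunc.C r) ^ (p - 1 - (i : ℕ)) / u ^ p)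
      = (∑ i ∈ Finset.range (p - 1), RatFunc.X ^ i * (RatFunc.C r) ^ (p - 1 - i)) / u ^ p := by
    rw [Finset.sum_div]
    exact Fin.sum_univ_eq_sum_range (fun i => RatFunc.X ^ i * (RatFunc.C r) ^ (p - 1 - i) / u ^ p) (p - 1)
  rw [hsum]
  have htop : (u⁻¹) ^ p * RatFunc.X ^ (p - 1)
      = RatFunc.X ^ (p - 1) * (RatFunc.C r) ^ (p - 1 - (p - 1)) / u ^ p := by
    rw [Nat.sub_self, pow_zero, mul_one, inv_pow]
    ring
  rw [htop, ← add_div]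
  have hsplit : (∑ i ∈ Finset.range (p - 1), RatFunc.X ^ i * (RatFunc.C r) ^ (p - 1 - i))
      + RatFunc.X ^ (p - 1) * (RatFunc.C r) ^ (p - 1 - (p - 1))
      = ∑ i ∈ Finset.range p, RatFunc.X ^ i * (RatFunc.C r) ^ (p - 1 - i) := by
    subst hq
    simp [Finset.sum_range_succ]
  rw [hsplit, key3]
  have hup : u ^ p = u ^ (p - 1) * u := by
    rw [← pow_succ, Nat.sub_add_cancel hp.out.one_le]
  rw [hup, div_mul_eq_div_div, div_self (pow_ne_zero _ hu), one_div]

end Good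

section Main
variable {k : Type*} [Field k]
open Polynomial RatFunc

local notation "φ" => algebraMap (Polynomial k) (RatFunc k)

variable {p : ℕ} [hp : Fact p.Prime] [CharP (RatFunc k) p] [IsAlgClosed k]

lemma good_LD_poly (q : k[X]) (hq : q ≠ 0) : IsGood p (LD (φ q)) := by
  have hsplit : Splits q := IsAlgClosed.splits q
  have hfact := hsplit.eq_prod_roots
  set M : Multiset k[X] := q.roots.map (fun a => Polynomial.X - Polynomial.C a) with hM
  have hM0 : ∀ r ∈ M, r ≠ 0 := by
    intro r hr
    obtain ⟨a, _, rfl⟩ := Multiset.mem_map.mp hr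
    exact X_sub_C_ne_zero a
  have hMprod : M.prod ≠ 0 := Multiset.prod_ne_zero (fun h0 => (hM0 0 h0) rfl)
  have hlc : q.leadingCoeff ≠ 0 := leadingCoeff_ne_zero.mpr hq
  have hCl : (Polynomial.C q.leadingCoeff : k[X]) ≠ 0 := by simpa using hlc
  have h1 : LD (φ q) = LD (φ (Polynomial.C q.leadingCoeff)) + LD (φ M.prod) := by
    conv_lhs => rw [hfact]
    rw [map_mul]
    exact aux_LD_mul (RatFunc.algebraMap_ne_zero hCl) (RatFunc.algebraMap_ne_zero hMprod)
  have h2 : LD (φ (Polynomial.C q.leadingCoeff)) = 0 := by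
    rw [aux_LD_poly, derivative_C, map_zero, zero_div]
  have h3 : LD (φ M.prod)
      = (q.roots.map (fun a => ((RatFunc.X - RatFunc.C a)⁻¹ : RatFunc k))).sum := by
    rw [aux_LD_prod M hM0, hM, Multiset.map_map]
    congr 1
    apply Multiset.map_congr rfl
    intro a _
    simp only [Function.comp_apply]
    rw [aux_LD_poly, derivative_X_sub_C, map_one, map_sub, RatFunc.algebraMap_X,
      RatFunc.algebraMap_C, one_div]
  rw [h1, h2, h3, zero_add]
  refine good_sum _ ?_
  intro g hg
  obtain ⟨a, _, rfl⟩ := Multiset.mem_map.mp hg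
  exact good_inv a

end Main


/-- Over an algebraically closed field of characteristic `p > 0`, the
Cartier operator fixes logarithmic differentials: for a nonzero rational function `w`,
the logarithmic derivative `w'/w` decomposes as
`w'/w = ∑_{i≤p-2} f_i^p X^i + (w'/w)^p X^{p-1}`, i.e. its top Cartier component is
`w'/w` itself. -/
theorem cartier_fixes_logarithmic_differentials
    {k : Type*} [Field k] [IsAlgClosed k] (p : ℕ) [CharP k p] (hp : 0 < p)
    (w : RatFunc k) (hw : w ≠ 0) :
    ∃ c : Fin (p - 1) → RatFunc k,
      ratDeriv w / w =
        (∑ i : Fin (p - 1), (c i) ^ p * RatFunc.X ^ (i : ℕ))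
          + (ratDeriv w / w) ^ p * RatFunc.X ^ (p - 1) := by
  haveI hp' : Fact p.Prime := ⟨(CharP.char_is_prime_or_zero k p).resolve_right (by omega)⟩
  haveI : CharP (RatFunc k) p :=
    charP_of_injective_algebraMap (algebraMap k (RatFunc k)).injective p
  show IsGood p (LD w)
  have h := aux_LD_div w.num w.denom (RatFunc.num_ne_zero hw) w.denom_ne_zero
  rw [RatFunc.num_div_denom] at h
  have h2 : LD w = LD (algebraMap (Polynomial k) (RatFunc k) w.num)
      - LD (algebraMap (Polynomial k) (RatFunc k) w.denom) := by
    rw [h, aux_LD_poly, aux_LD_poly]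
  rw [h2]
  exact good_sub (good_LD_poly _ (RatFunc.num_ne_zero hw)) (good_LD_poly _ w.denom_ne_zero)
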